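/- Suppose the credit-attributing next-token predictor M̃ is (ε,0)-CCA and its crediting rollout G̃ is (ε',0)-CCA. Fix a dataset S, a document s_i ∈ S, and a prompt x₀, and suppose Pr[G̃(S, x₀) credits s_i] < 1. Then for every pair (x⁻ⁱ, C⁻ⁱ) in the support of G̃(S, x₀) with s_i ∉ C⁻ⁱ, writing x⁻ⁱ = x₀ ∥ x₁ ∥ … ∥ x_n for the n generated tokens, it holds that ε' ≥ ln( (∏_{j=1}^{n} Pr_{(t,C')∼M̃(S, x₀∥x₁∥…∥x_{j−1})}[s_i ∉ C']) / Pr[G̃(S,x₀) does not credit s_i] ) − n·ε. -/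

import Mathlib

open scoped ENNReal Classical

noncomputable section

namespace CCA

variable {α X D Y : Type*}

/-- Conditional probability of an event `E` given event `B`, for a set function `P`. -/
def prCond (P : Set α → ℝ≥0∞) (B : Set α) : Set α → ℝ≥0∞ := fun E => P (E ∩ B) / P B

/-- `(ε,δ)`-closeness of two set functions, as in differential privacy. -/
def Close (ε δ : ℝ) (P Q : Set α → ℝ≥0∞) : Prop :=
  ∀ E : Set α,
    P E ≤ ENNReal.ofReal (Real.exp ε) * Q E + ENNReal.ofReal δ ∧
    Q E ≤ ENNReal.ofReal (Real.exp ε) * P E + ENNReal.ofReal δ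

/-- `(ε,δ)`-counterfactual credit attribution for a kernel `K` mapping a dataset `S` and a
prompt `x` to a (sub)probability set function over (output, credit set) pairs: for every
prompt, dataset and `s ∈ S`, either `s` is credited with probability `1`, or the conditional
distribution given `s` not credited is `(ε,δ)`-close to the counterfactual on `S \ {s}`. -/
def IsCCA (ε δ : ℝ) (K : Set D → List X → Set (Y × Set D) → ℝ≥0∞) : Prop :=
  ∀ (S : Set D) (x : List X) (s : D), s ∈ S →
    K S x {q | s ∈ q.2} = 1 ∨
    Close ε δ (prCond (K S x) {q | s ∉ q.2}) (K (S \ {s}) x)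

/-- The event kernel associated with a PMF-valued crediting algorithm. -/
def pmfKernel (M : Set D → List X → PMF (Y × Set D)) :
    Set D → List X → Set (Y × Set D) → ℝ≥0∞ :=
  fun S x E => (M S x).toOuterMeasure E

/-- Probability that the crediting rollout of `M` on current prompt `x` produces exactly the
trace `w` of (token, credit set) pairs. -/
def traceProb (M : Set D → List X → PMF (X × Set D)) (S : Set D) :
    List X → List (X × Set D) → ℝ≥0∞
  | _, [] => 1
  | x, q :: w => M S x q * traceProb M S (x ++ [q.1]) w

/-- A terminal trace: the last generated token is `bot` and no earlier token is `bot`. -/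
def IsTerminal (bot : X) (w : List (X × Set D)) : Prop :=
  (w.map Prod.fst).getLast? = some bot ∧ ∀ y ∈ (w.map Prod.fst).dropLast, y ≠ bot

/-- The union of the credit sets appearing along a trace. -/
def creditOf (w : List (X × Set D)) : Set D := w.foldr (fun q acc => q.2 ∪ acc) ∅

/-- Probability that the crediting rollout of `M` on `(S, x0)` outputs the
(generated string, credit set) pair `o`. -/
def rolloutProb (bot : X) (M : Set D → List X → PMF (X × Set D)) (S : Set D)
    (x0 : List X) (o : List X × Set D) : ℝ≥0∞ :=
  ∑' w : {w : List (X × Set D) //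
      IsTerminal bot w ∧ x0 ++ w.map Prod.fst = o.1 ∧ creditOf w = o.2},
    traceProb M S x0 w.1

/-- Event kernel of the crediting rollout of `M`. -/
def rolloutK (bot : X) (M : Set D → List X → PMF (X × Set D)) :
    Set D → List X → Set (List X × Set D) → ℝ≥0∞ :=
  fun S x0 E => ∑' o : E, rolloutProb bot M S x0 ↑o


section Stmt3Aux

variable {X D : Type*}

private lemma ediv_mul_le (a b : ℝ≥0∞) : a / b * b ≤ a := by
  rw [div_eq_mul_inv, mul_assoc]
  exact mul_le_of_le_one_right' (ENNReal.inv_mul_le_one b)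

private lemma pmf_compl_add {β : Type*} (p : PMF β) (A : Set β) :
    p.toOuterMeasure A + p.toOuterMeasure Aᶜ = 1 := by
  rw [PMF.toOuterMeasure_apply, PMF.toOuterMeasure_apply, ← ENNReal.tsum_add, ← p.tsum_coe]
  congr 1; funext a
  by_cases h : a ∈ A <;> simp [Set.indicator, h]

/-- Mass of the "s not credited" event at a prompt. -/
def dM (M : Set D → List X → PMF (X × Set D)) (S : Set D) (s : D) (x : List X) : ℝ≥0∞ :=
  (M S x).toOuterMeasure {q : X × Set D | s ∉ q.2}

/-- Product of the "not credited" masses along a token path. -/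
def prodD (M : Set D → List X → PMF (X × Set D)) (S : Set D) (s : D) :
    List X → List X → ℝ≥0∞
  | _, [] => 1
  | x, y :: ys => dM M S s x * prodD M S s (x ++ [y]) ys

lemma prodD_eq (M : Set D → List X → PMF (X × Set D)) (S : Set D) (s : D) :
    ∀ (t x : List X),
      prodD M S s x t = ∏ j ∈ Finset.range t.length, dM M S s (x ++ t.take j) := by
  intro t
  induction t with
  | nil => intro x; simp [prodD]
  | cons y ys ih =>
    intro x
    rw [show prodD M S s x (y :: ys) = dM M S s x * prodD M S s (x ++ [y]) ys from rfl, ih,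
      List.length_cons, Finset.prod_range_succ']
    simp only [List.take_succ_cons, List.take_zero, List.append_nil]
    rw [mul_comm]
    congr 1
    refine Finset.prod_congr rfl fun j _ => ?_
    congr 1
    simp

lemma subset_creditOf {w : List (X × Set D)} {q : X × Set D} (hq : q ∈ w) :
    q.2 ⊆ creditOf w := by
  induction w with
  | nil => simp at hq
  | cons a w ih =>
    have hc : creditOf (a :: w) = a.2 ∪ creditOf w := rfl
    rcases List.mem_cons.1 hq with h | h
    · subst h; rw [hc]; exact Set.subset_union_left
    · rw [hc]; exact (ih h).trans Set.subset_union_right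

lemma close_of_dM_ne_zero (M : Set D → List X → PMF (X × Set D)) (ε : ℝ)
    (hM : IsCCA ε 0 (pmfKernel M)) (S : Set D) (s : D) (hs : s ∈ S) (x : List X)
    (hd : dM M S s x ≠ 0) :
    Close ε 0 (prCond (pmfKernel M S x) {q | s ∉ q.2}) (pmfKernel M (S \ {s}) x) := by
  rcases hM S x s hs with h1 | h2
  · exfalso
    apply hd
    have hadd := pmf_compl_add (M S x) {q : X × Set D | s ∈ q.2}
    have hc : ({q : X × Set D | s ∈ q.2})ᶜ = {q : X × Set D | s ∉ q.2} := by ext q; simp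
    have h1' : (M S x).toOuterMeasure {q : X × Set D | s ∈ q.2} = 1 := h1
    rw [h1', hc] at hadd
    exact (ENNReal.add_right_inj ENNReal.one_ne_top).1 (by rw [add_zero]; exact hadd)
  · exact h2

lemma step_bound (M : Set D → List X → PMF (X × Set D)) (ε : ℝ) (S : Set D) (s : D)
    (x : List X) (q : X × Set D) (hq : s ∉ q.2)
    (hcl : Close ε 0 (prCond (pmfKernel M S x) {r | s ∉ r.2}) (pmfKernel M (S \ {s}) x)) :
    M (S \ {s}) x q * dM M S s x ≤ ENNReal.ofReal (Real.exp ε) * M S x q := by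
  have h := (hcl {q}).2
  rw [ENNReal.ofReal_zero, add_zero] at h
  have hsing : ({q} : Set (X × Set D)) ∩ {r | s ∉ r.2} = {q} :=
    Set.inter_eq_self_of_subset_left (Set.singleton_subset_iff.2 hq)
  unfold prCond pmfKernel at h
  rw [hsing, PMF.toOuterMeasure_apply_singleton, PMF.toOuterMeasure_apply_singleton] at h
  calc M (S \ {s}) x q * dM M S s x
      ≤ ENNReal.ofReal (Real.exp ε) *
          (M S x q / (M S x).toOuterMeasure {r | s ∉ r.2}) * dM M S s x :=
        mul_le_mul_left h _
    _ = ENNReal.ofReal (Real.exp ε) * (M S x q / dM M S s x * dM M S s x) := by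
        rw [mul_assoc]; rfl
    _ ≤ _ := mul_le_mul_right (ediv_mul_le _ _) _

lemma trace_bound (M : Set D → List X → PMF (X × Set D)) (ε : ℝ) (S : Set D) (s : D) :
    ∀ (w : List (X × Set D)) (x : List X),
      (∀ q ∈ w, s ∉ q.2) →
      (∀ j < w.length, Close ε 0
          (prCond (pmfKernel M S (x ++ (w.map Prod.fst).take j)) {r | s ∉ r.2})
          (pmfKernel M (S \ {s}) (x ++ (w.map Prod.fst).take j))) →
      traceProb M (S \ {s}) x w * prodD M S s x (w.map Prod.fst)
        ≤ ENNReal.ofReal (Real.exp (w.length * ε)) * traceProb M S x w := by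
  intro w
  induction w with
  | nil => intro x _ _; simp [traceProb, prodD]
  | cons q w ih =>
    intro x hcred hcl
    have h0 : Close ε 0 (prCond (pmfKernel M S x) {r | s ∉ r.2})
        (pmfKernel M (S \ {s}) x) := by
      have h := hcl 0 (by simp)
      simpa using h
    have hq : s ∉ q.2 := hcred q (by simp)
    have hstep := step_bound M ε S s x q hq h0
    have hih := ih (x ++ [q.1]) (fun r hr => hcred r (by simp [hr]))
      (fun j hj => by
        have h := hcl (j + 1) (by simpa using Nat.succ_lt_succ hj)
        have e : x ++ ((q :: w).map Prod.fst).take (j + 1)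
            = (x ++ [q.1]) ++ (w.map Prod.fst).take j := by simp
        rw [e] at h
        exact h)
    calc traceProb M (S \ {s}) x (q :: w) * prodD M S s x ((q :: w).map Prod.fst)
        = (M (S \ {s}) x q * dM M S s x) *
            (traceProb M (S \ {s}) (x ++ [q.1]) w * prodD M S s (x ++ [q.1]) (w.map Prod.fst)) := by
          show (M (S \ {s}) x q * traceProb M (S \ {s}) (x ++ [q.1]) w) *
              (dM M S s x * prodD M S s (x ++ [q.1]) (w.map Prod.fst)) = _
          ring
      _ ≤ (ENNReal.ofReal (Real.exp ε) * M S x q) *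
            (ENNReal.ofReal (Real.exp (w.length * ε)) * traceProb M S (x ++ [q.1]) w) :=
          mul_le_mul' hstep hih
      _ = ENNReal.ofReal (Real.exp ((q :: w).length * ε)) * traceProb M S x (q :: w) := by
          show _ = _ * (M S x q * traceProb M S (x ++ [q.1]) w)
          rw [List.length_cons,
            show (((w.length + 1 : ℕ) : ℝ)) * ε = ε + (w.length : ℝ) * ε by push_cast; ring,
            Real.exp_add, ENNReal.ofReal_mul (Real.exp_nonneg ε)]
          ring

lemma trace_pos (M : Set D → List X → PMF (X × Set D)) (S : Set D) (s : D) :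
    ∀ (w : List (X × Set D)) (x : List X),
      traceProb M S x w ≠ 0 → (∀ q ∈ w, s ∉ q.2) →
      ∀ j < w.length, dM M S s (x ++ (w.map Prod.fst).take j) ≠ 0 := by
  intro w
  induction w with
  | nil => intro x _ _ j hj; simp at hj
  | cons q w ih =>
    intro x hw hcred j hj
    rw [show traceProb M S x (q :: w) = M S x q * traceProb M S (x ++ [q.1]) w from rfl] at hw
    have h1 : M S x q ≠ 0 := fun h => hw (by simp [h])
    have h2 : traceProb M S (x ++ [q.1]) w ≠ 0 := fun h => hw (by simp [h])
    match j with
    | 0 =>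
      simp only [List.take_zero, List.append_nil]
      intro h0
      apply h1
      have hle : M S x q ≤ dM M S s x := by
        rw [← PMF.toOuterMeasure_apply_singleton]
        exact MeasureTheory.measure_mono
          (Set.singleton_subset_iff.2 (hcred q (by simp)))
      exact le_antisymm (h0 ▸ hle) zero_le
    | j + 1 =>
      have h := ih (x ++ [q.1]) h2 (fun r hr => hcred r (by simp [hr])) j
        (by simpa using Nat.lt_of_succ_lt_succ hj)
      have e : x ++ ((q :: w).map Prod.fst).take (j + 1)
          = (x ++ [q.1]) ++ (w.map Prod.fst).take j := by simp
      rw [e]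
      exact h

lemma rollout_bound (bot : X) (M : Set D → List X → PMF (X × Set D)) (ε : ℝ)
    (S : Set D) (s : D) (x0 t : List X) (C : Set D) (hC : s ∉ C)
    (hcl : ∀ j < t.length, Close ε 0
        (prCond (pmfKernel M S (x0 ++ t.take j)) {r | s ∉ r.2})
        (pmfKernel M (S \ {s}) (x0 ++ t.take j))) :
    rolloutProb bot M (S \ {s}) x0 (x0 ++ t, C) * prodD M S s x0 t
      ≤ ENNReal.ofReal (Real.exp (t.length * ε)) * rolloutProb bot M S x0 (x0 ++ t, C) := by
  unfold rolloutProb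
  rw [← ENNReal.tsum_mul_right, ← ENNReal.tsum_mul_left]
  apply ENNReal.tsum_le_tsum
  rintro ⟨w, hwt, hx, hcw⟩
  simp only
  have htok : w.map Prod.fst = t := List.append_cancel_left hx
  have hlen : w.length = t.length := by rw [← htok, List.length_map]
  have hwc : ∀ q ∈ w, s ∉ q.2 := fun q hq hsq => hC (by
    have h := subset_creditOf hq hsq
    rw [hcw] at h
    exact h)
  have h := trace_bound M ε S s w x0 hwc (by rw [htok, hlen]; exact hcl)
  rw [htok, hlen] at h
  exact h

lemma rolloutK_le_univ (bot : X) (M : Set D → List X → PMF (X × Set D))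
    (S : Set D) (x0 : List X) (E : Set (List X × Set D)) :
    rolloutK bot M S x0 E ≤ rolloutK bot M S x0 Set.univ := by
  unfold rolloutK
  rw [tsum_univ, tsum_subtype]
  exact ENNReal.tsum_le_tsum fun o => Set.indicator_le_self E _ o

lemma rolloutK_add_compl (bot : X) (M : Set D → List X → PMF (X × Set D))
    (S : Set D) (x0 : List X) (E : Set (List X × Set D)) :
    rolloutK bot M S x0 E + rolloutK bot M S x0 Eᶜ = rolloutK bot M S x0 Set.univ := by
  unfold rolloutK
  rw [tsum_univ]
  exact Summable.tsum_add_tsum_compl ENNReal.summable ENNReal.summable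

lemma rolloutK_singleton (bot : X) (M : Set D → List X → PMF (X × Set D))
    (S : Set D) (x0 : List X) (o : List X × Set D) :
    rolloutK bot M S x0 {o} = rolloutProb bot M S x0 o :=
  tsum_singleton o _

end Stmt3Aux

/-- Composition lower bound: if the crediting next-token predictor `M` is `(ε,0)`-CCA, its
rollout is `(ε',0)`-CCA and terminates with probability one, and the rollout on `(S, x0)`
credits `s` with probability `< 1`, then for every output `(x0 ++ t, C)` in the support of
the rollout with `s ∉ C`,
`ε' ≥ ln( (∏_j Pr_{M(S, x0∥t_1…t_{j-1})}[s not credited]) / Pr[rollout does not credit s] )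
      - |t| ε`. -/
theorem stmt3 {X D : Type*} (bot : X) (M : Set D → List X → PMF (X × Set D)) (ε ε' : ℝ)
    (hM : IsCCA ε 0 (pmfKernel M))
    (hterm : ∀ (S : Set D) (x : List X), rolloutK bot M S x Set.univ = 1)
    (hG : IsCCA ε' 0 (rolloutK bot M))
    (S : Set D) (s : D) (hs : s ∈ S) (x0 : List X)
    (hlt : rolloutK bot M S x0 {q | s ∈ q.2} < 1)
    (t : List X) (C : Set D)
    (hsupp : rolloutProb bot M S x0 (x0 ++ t, C) ≠ 0) (hC : s ∉ C) :
    ε' ≥ Real.log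
        ((∏ j ∈ Finset.range t.length,
            ((M S (x0 ++ t.take j)).toOuterMeasure {q : X × Set D | s ∉ q.2}).toReal) /
          (rolloutK bot M S x0 {q | s ∉ q.2}).toReal)
      - (t.length : ℝ) * ε := by
  classical
  set n := t.length with hn
  set A : Set (X × Set D) := {q : X × Set D | s ∉ q.2} with hA
  set A' : Set (List X × Set D) := {q : List X × Set D | s ∉ q.2} with hA'
  set o : List X × Set D := (x0 ++ t, C) with ho
  set P : ℝ≥0∞ := rolloutProb bot M S x0 o with hP
  set Q : ℝ≥0∞ := rolloutProb bot M (S \ {s}) x0 o with hQ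
  set B : ℝ≥0∞ := rolloutK bot M S x0 A' with hB
  -- witness trace
  have hex : ∃ w : {w : List (X × Set D) //
      IsTerminal bot w ∧ x0 ++ w.map Prod.fst = o.1 ∧ creditOf w = o.2},
      traceProb M S x0 w.1 ≠ 0 := by
    by_contra hcon
    push_neg at hcon
    apply hsupp
    rw [hP]
    exact ENNReal.tsum_eq_zero.2 hcon
  obtain ⟨⟨w, hwt, hwx, hwc⟩, hwpos⟩ := hex
  have htok : w.map Prod.fst = t := List.append_cancel_left hwx
  have hlen : w.length = t.length := by rw [← htok, List.length_map]
  have hwcred : ∀ q ∈ w, s ∉ q.2 := fun q hq hsq => hC (by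
    have h := subset_creditOf hq hsq
    rw [hwc] at h
    exact h)
  -- dM positive along prefixes
  have hdpos : ∀ j < n, dM M S s (x0 ++ t.take j) ≠ 0 := by
    intro j hj
    have h := trace_pos M S s w x0 hwpos hwcred j (by rw [hlen]; exact hj)
    rw [htok] at h
    exact h
  -- closeness at each prefix
  have hcl : ∀ j < n, Close ε 0
      (prCond (pmfKernel M S (x0 ++ t.take j)) {r | s ∉ r.2})
      (pmfKernel M (S \ {s}) (x0 ++ t.take j)) :=
    fun j hj => close_of_dM_ne_zero M ε hM S s hs _ (hdpos j hj)
  -- trace product bound summed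
  have hQP : Q * prodD M S s x0 t ≤ ENNReal.ofReal (Real.exp (n * ε)) * P :=
    rollout_bound bot M ε S s x0 t C hC hcl
  -- rollout closeness
  have hGclose : Close ε' 0 (prCond (rolloutK bot M S x0) A') (rolloutK bot M (S \ {s}) x0) := by
    rcases hG S x0 s hs with h1 | h2
    · exact absurd h1 hlt.ne
    · exact h2
  have hPB : P / B ≤ ENNReal.ofReal (Real.exp ε') * Q := by
    have h := (hGclose {o}).1
    rw [ENNReal.ofReal_zero, add_zero] at h
    have hint : ({o} : Set (List X × Set D)) ∩ A' = {o} :=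
      Set.inter_eq_self_of_subset_left (Set.singleton_subset_iff.2 hC)
    unfold prCond at h
    rw [hint, rolloutK_singleton, rolloutK_singleton] at h
    exact h
  -- basic facts about B and P
  have hBtop : B ≠ ⊤ := by
    have := (rolloutK_le_univ bot M S x0 A').trans_eq (hterm S x0)
    exact (this.trans_lt ENNReal.one_lt_top).ne
  have hB1 : B ≤ 1 := (rolloutK_le_univ bot M S x0 A').trans_eq (hterm S x0)
  have hcompl : ({q : List X × Set D | s ∈ q.2})ᶜ = A' := by ext q; simp [hA']
  have hBne : B ≠ 0 := by
    intro h0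
    have hadd := rolloutK_add_compl bot M S x0 {q : List X × Set D | s ∈ q.2}
    rw [hcompl, hterm S x0] at hadd
    rw [show rolloutK bot M S x0 A' = B from rfl, h0, add_zero] at hadd
    exact absurd hadd hlt.ne
  have hPtop : P ≠ ⊤ := by
    have h1 : P ≤ rolloutK bot M S x0 Set.univ := by
      rw [hP, ← rolloutK_singleton bot M S x0 o]
      exact rolloutK_le_univ bot M S x0 {o}
    rw [hterm S x0] at h1
    exact (h1.trans_lt ENNReal.one_lt_top).ne
  have hPne : P ≠ 0 := hsupp
  -- chain
  set Ad : ℝ≥0∞ := prodD M S s x0 t with hAd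
  have hchain : P * Ad ≤ P * (ENNReal.ofReal (Real.exp ε') * ENNReal.ofReal (Real.exp (n * ε)) * B) := by
    have h1 : P / B * Ad ≤ ENNReal.ofReal (Real.exp ε') * (ENNReal.ofReal (Real.exp (n * ε)) * P) := by
      calc P / B * Ad ≤ (ENNReal.ofReal (Real.exp ε') * Q) * Ad := mul_le_mul_left hPB _
        _ = ENNReal.ofReal (Real.exp ε') * (Q * Ad) := by rw [mul_assoc]
        _ ≤ _ := mul_le_mul_right hQP _
    have h2 : P * Ad / B * B ≤ ENNReal.ofReal (Real.exp ε') * (ENNReal.ofReal (Real.exp (n * ε)) * P) * B := by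
      apply mul_le_mul_left _ B
      calc P * Ad / B = P / B * Ad := by
            rw [div_eq_mul_inv, div_eq_mul_inv, mul_right_comm]
        _ ≤ _ := h1
    rw [ENNReal.div_mul_cancel hBne hBtop] at h2
    calc P * Ad ≤ ENNReal.ofReal (Real.exp ε') * (ENNReal.ofReal (Real.exp (n * ε)) * P) * B := h2
      _ = P * (ENNReal.ofReal (Real.exp ε') * ENNReal.ofReal (Real.exp (n * ε)) * B) := by ring
  have hmain : Ad ≤ ENNReal.ofReal (Real.exp ε') * ENNReal.ofReal (Real.exp (n * ε)) * B :=
    (ENNReal.mul_le_mul_iff_right hPne hPtop).1 hchain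
  -- reformulate Ad
  have hAdeq : Ad = ∏ j ∈ Finset.range n, dM M S s (x0 ++ t.take j) := prodD_eq M S s t x0
  have hdle : ∀ j ∈ Finset.range n, dM M S s (x0 ++ t.take j) ≤ 1 := by
    intro j _
    calc dM M S s (x0 ++ t.take j) ≤ (M S (x0 ++ t.take j)).toOuterMeasure Set.univ :=
        MeasureTheory.measure_mono (Set.subset_univ _)
      _ = 1 := (PMF.toOuterMeasure_apply_eq_one_iff _ _).2 (Set.subset_univ _)
  have hAd1 : Ad ≤ 1 := by rw [hAdeq]; exact Finset.prod_le_one' hdle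
  have hAdtop : Ad ≠ ⊤ := (hAd1.trans_lt ENNReal.one_lt_top).ne
  have hAdne : Ad ≠ 0 := by
    rw [hAdeq]
    exact Finset.prod_ne_zero_iff.2 fun j hj => hdpos j (Finset.mem_range.1 hj)
  -- to reals
  have hRHStop : ENNReal.ofReal (Real.exp ε') * ENNReal.ofReal (Real.exp (n * ε)) * B ≠ ⊤ := by
    apply ENNReal.mul_ne_top (ENNReal.mul_ne_top ENNReal.ofReal_ne_top ENNReal.ofReal_ne_top) hBtop
  have hreal : Ad.toReal ≤ Real.exp ε' * Real.exp (n * ε) * B.toReal := by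
    have h := ENNReal.toReal_mono hRHStop hmain
    rwa [ENNReal.toReal_mul, ENNReal.toReal_mul, ENNReal.toReal_ofReal (Real.exp_nonneg _),
      ENNReal.toReal_ofReal (Real.exp_nonneg _)] at h
  have hAdpos : 0 < Ad.toReal := ENNReal.toReal_pos hAdne hAdtop
  have hBpos : 0 < B.toReal := ENNReal.toReal_pos hBne hBtop
  have hgoalA : (∏ j ∈ Finset.range n,
      ((M S (x0 ++ t.take j)).toOuterMeasure {q : X × Set D | s ∉ q.2}).toReal) = Ad.toReal := by
    rw [hAdeq, ENNReal.toReal_prod]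
    rfl
  have hlog : Real.log (Ad.toReal / B.toReal) ≤ ε' + n * ε := by
    rw [Real.log_le_iff_le_exp (div_pos hAdpos hBpos), Real.exp_add,
      div_le_iff₀ hBpos]
    exact hreal
  rw [ge_iff_le, hgoalA]
  have : Real.log (Ad.toReal / (rolloutK bot M S x0 {q | s ∈ q.2}ᶜ).toReal) ≤ ε' + n * ε := by
    rw [hcompl]
    exact hlog
  linarith [hlog]


end CCA
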